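/- Let M : ℝ → ℝ be the moment generating function of the inverse Gaussian (Wald) distribution with parameters μ, ν > 0, i.e., M(λ) = exp((ν/μ)(1 - √(1 - 2μ²λ/ν))) for λ ≤ ν/(2μ²). Then for S₀ > 0 and 0 < S ≤ S₀, the function h(S) = S₀ · M'(M⁻¹(S/S₀)) equals ν·S / (ν/μ - ln(S/S₀)). -/

import Mathlib

/-- Transmission function from Wald (inverse Gaussian) distributed
susceptibility (Equation (gd3)): if `M λ = exp((ν/μ)(1 - √(1 - 2μ²λ/ν)))` for
`λ ≤ ν/(2μ²)` is the mgf of the inverse Gaussian distribution with parameters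
`μ, ν > 0`, and `Minv` its inverse on `(0,1]`, then
`h S = S₀ * M'(Minv (S/S₀)) = ν S / (ν/μ - ln(S/S₀))` for `0 < S ≤ S₀`. -/
theorem wald_transmission_function
    (μ ν S₀ : ℝ) (hμ : 0 < μ) (hν : 0 < ν) (hS₀ : 0 < S₀)
    (M Minv : ℝ → ℝ)
    (hM : ∀ l : ℝ, l ≤ ν / (2 * μ ^ 2) →
      M l = Real.exp ((ν / μ) * (1 - Real.sqrt (1 - 2 * μ ^ 2 * l / ν))))
    (hMinv : ∀ ξ : ℝ, 0 < ξ → ξ ≤ 1 →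
      Minv ξ ≤ ν / (2 * μ ^ 2) ∧ M (Minv ξ) = ξ)
    (S : ℝ) (hS : 0 < S) (hSS₀ : S ≤ S₀) :
    S₀ * deriv M (Minv (S / S₀)) = ν * S / (ν / μ - Real.log (S / S₀)) := by
  set ξ : ℝ := S / S₀ with hξdef
  have hξpos : 0 < ξ := div_pos hS hS₀
  have hξle : ξ ≤ 1 := (div_le_one hS₀).2 hSS₀
  obtain ⟨hxle, hMx⟩ := hMinv ξ hξpos hξle
  set x : ℝ := Minv ξ with hxdef
  set b : ℝ := ν / (2 * μ ^ 2) with hbdef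
  have hμ2 : (0:ℝ) < 2 * μ ^ 2 := by positivity
  -- strict inequality
  have hxlt : x < b := by
    rcases lt_or_eq_of_le hxle with h | h
    · exact h
    · exfalso
      have harg : 1 - 2 * μ ^ 2 * x / ν = 0 := by
        rw [h, hbdef]; field_simp; norm_num
      have hMe := hM x hxle
      rw [harg, Real.sqrt_zero, sub_zero, mul_one] at hMe
      rw [hMe] at hMx
      have h1 : (1:ℝ) < Real.exp (ν / μ) :=
        Real.one_lt_exp_iff.2 (by positivity)
      linarith [hMx ▸ hξle]
  -- positivity of the sqrt argument
  set u : ℝ := 1 - 2 * μ ^ 2 * x / ν with hudef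
  have hu : 0 < u := by
    rw [hudef]
    have : 2 * μ ^ 2 * x < ν := by
      have := (lt_div_iff₀ hμ2).1 hxlt
      linarith [this]
    have : 2 * μ ^ 2 * x / ν < 1 := (div_lt_one hν).2 this
    linarith
  set s : ℝ := Real.sqrt u with hsdef
  have hs : 0 < s := Real.sqrt_pos.2 hu
  -- log equation
  have hMe := hM x hxle
  rw [← hudef, ← hsdef] at hMe
  have hlog : ν / μ * (1 - s) = Real.log ξ := by
    rw [← hMx, hMe, Real.log_exp]
  -- derivative of the explicit formula
  have h0 : HasDerivAt (fun l : ℝ => 1 - 2 * μ ^ 2 * l / ν) (-(2 * μ ^ 2 / ν)) x := by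
    have h := ((hasDerivAt_id x).const_mul (2 * μ ^ 2 / ν)).const_sub 1
    have e : (fun l : ℝ => 1 - 2 * μ ^ 2 * l / ν) = fun l => 1 - 2 * μ ^ 2 / ν * id l := by
      funext l; simp only [id_eq]; ring
    rw [e]
    exact h.congr_deriv (by ring)
  have h1 : HasDerivAt (fun l : ℝ => Real.sqrt (1 - 2 * μ ^ 2 * l / ν))
      (-(2 * μ ^ 2 / ν) / (2 * s)) x := by
    have := h0.sqrt (by rw [← hudef]; exact ne_of_gt hu)
    simpa [← hudef, ← hsdef] using this
  have h2 : HasDerivAt (fun l : ℝ => Real.exp ((ν / μ) * (1 - Real.sqrt (1 - 2 * μ ^ 2 * l / ν))))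
      (Real.exp ((ν / μ) * (1 - s)) * ((ν / μ) * (-(-(2 * μ ^ 2 / ν) / (2 * s))))) x := by
    exact ((h1.const_sub 1).const_mul (ν / μ)).exp
  -- M agrees with the formula near x
  have heq : M =ᶠ[nhds x] fun l : ℝ => Real.exp ((ν / μ) * (1 - Real.sqrt (1 - 2 * μ ^ 2 * l / ν))) := by
    filter_upwards [eventually_lt_nhds hxlt] with l hl
    exact hM l hl.le
  have hd : deriv M x = Real.exp ((ν / μ) * (1 - s)) * ((ν / μ) * (-(-(2 * μ ^ 2 / ν) / (2 * s)))) := by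
    rw [heq.deriv_eq, h2.deriv]
  rw [hd]
  have hexp : Real.exp ((ν / μ) * (1 - s)) = ξ := by rw [← hMe, hMx]
  rw [hexp]
  -- final arithmetic: ν/μ - log ξ = (ν/μ) * s
  have hden : ν / μ - Real.log ξ = ν / μ * s := by
    rw [← hlog]; ring
  rw [hden, hξdef]
  have hS₀ne : S₀ ≠ 0 := ne_of_gt hS₀
  field_simp
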